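/- Let κ, μ be complex numbers with Re(μ + κ + 1/2) > 0 and Re(μ − κ + 1/2) > 0. Define for z > 0: F(z) = (√π · Γ(2μ+1)) / (2^μ · Γ((μ+κ+1/2)/2) · Γ((μ−κ+1/2)/2)) · √z · ∫₀¹ ξ^{(−κ+1/2)/2 − 1} (1−ξ)^{(κ+1/2)/2 − 1} e^{(ξ−1/2)z} J_μ(√(ξ(1−ξ)) · z) dξ. Then the limit as z → 0⁺ of z^{−(μ+1/2)} · F(z) equals 1; that is, F(z) ~ z^{μ+1/2} as z → 0⁺. -/

import Mathlib

open scoped Real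
open Complex MeasureTheory Filter Set

/-- Bessel function of the first kind `J_ν(z)` of complex order. -/
noncomputable def besselJ (ν z : ℂ) : ℂ :=
  ∑' n : ℕ, ((-1 : ℂ) ^ n / (Complex.Gamma (ν + n + 1) * n.factorial)) * (z / 2) ^ (ν + 2 * n)

namespace WhittakerAux

noncomputable def gfun (μ t : ℂ) : ℂ :=
  ∑' n : ℕ, ((-1 : ℂ) ^ n / (Complex.Gamma (μ + n + 1) * n.factorial)) * t ^ n

lemma gamma_inv_bound {μ : ℂ} (hμ : -1 < μ.re) :
    ∃ C : ℝ, 0 < C ∧ ∀ n : ℕ, ‖(Complex.Gamma (μ + n + 1))⁻¹‖ ≤ C := by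
  refine ⟨max ‖(Complex.Gamma (μ + 1))⁻¹‖ ‖(Complex.Gamma (μ + 2))⁻¹‖ + 1,
    by positivity, ?_⟩
  have key : ∀ n : ℕ, 1 ≤ n → ‖(Complex.Gamma (μ + n + 1))⁻¹‖ ≤ ‖(Complex.Gamma (μ + 2))⁻¹‖ := by
    intro n hn
    induction n with
    | zero => omega
    | succ m ih =>
      rcases Nat.eq_zero_or_pos m with hm | hm
      · subst hm
        have he : (μ + ((0 + 1 : ℕ) : ℂ) + 1) = μ + 2 := by push_cast; ring
        rw [he]
      · have hne : μ + m + 1 ≠ 0 := by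
          intro h
          have := congrArg Complex.re h
          simp [Complex.add_re] at this
          linarith
        have hΓ : Complex.Gamma (μ + (m + 1 : ℕ) + 1) = (μ + m + 1) * Complex.Gamma (μ + m + 1) := by
          rw [show (μ + (m + 1 : ℕ) + 1) = (μ + m + 1) + 1 by push_cast; ring,
            Complex.Gamma_add_one _ hne]
        rw [hΓ, mul_inv, norm_mul]
        have h1 : ‖(μ + m + 1 : ℂ)⁻¹‖ ≤ 1 := by
          rw [norm_inv]
          rw [inv_le_one_iff₀]
          right
          have : (1 : ℝ) ≤ (μ + m + 1).re := by
            simp [Complex.add_re]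
            have : (1:ℝ) ≤ m := by exact_mod_cast hm
            linarith
          calc (1:ℝ) ≤ (μ + m + 1).re := this
            _ ≤ ‖(μ + m + 1 : ℂ)‖ := Complex.re_le_norm _
        calc ‖(μ + ↑m + 1:ℂ)⁻¹‖ * ‖(Complex.Gamma (μ + ↑m + 1))⁻¹‖
            ≤ 1 * ‖(Complex.Gamma (μ + ↑m + 1))⁻¹‖ := by
              gcongr
          _ = ‖(Complex.Gamma (μ + ↑m + 1))⁻¹‖ := one_mul _
          _ ≤ ‖(Complex.Gamma (μ + 2))⁻¹‖ := ih hm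
  intro n
  rcases Nat.eq_zero_or_pos n with hn | hn
  · subst hn
    simp only [Nat.cast_zero, add_zero]
    calc ‖(Complex.Gamma (μ + 1))⁻¹‖ ≤ max _ _ := le_max_left _ _
      _ ≤ _ + 1 := by linarith
  · calc ‖(Complex.Gamma (μ + n + 1))⁻¹‖ ≤ ‖(Complex.Gamma (μ + 2))⁻¹‖ := key n hn
      _ ≤ max ‖(Complex.Gamma (μ + 1))⁻¹‖ ‖(Complex.Gamma (μ + 2))⁻¹‖ := le_max_right _ _
      _ ≤ _ + 1 := by linarith

lemma term_norm {μ : ℂ} {C : ℝ} (hC : ∀ n : ℕ, ‖(Complex.Gamma (μ + n + 1))⁻¹‖ ≤ C)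
    (n : ℕ) (t : ℂ) :
    ‖((-1 : ℂ) ^ n / (Complex.Gamma (μ + n + 1) * n.factorial)) * t ^ n‖
      ≤ C * ‖t‖ ^ n / n.factorial := by
  rw [norm_mul, norm_div, norm_mul, norm_pow, norm_neg, norm_one, one_pow, norm_pow]
  rw [Complex.norm_natCast]
  rw [one_div, mul_inv, ← norm_inv]
  have h1 : ‖(Complex.Gamma (μ + n + 1))⁻¹‖ * ((n.factorial : ℝ))⁻¹ * ‖t‖ ^ n
      ≤ C * ((n.factorial : ℝ))⁻¹ * ‖t‖ ^ n := by
    gcongr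
    exact hC n
  calc ‖(Complex.Gamma (μ + ↑n + 1))⁻¹‖ * (↑n.factorial)⁻¹ * ‖t‖ ^ n
      ≤ C * ((n.factorial : ℝ))⁻¹ * ‖t‖ ^ n := h1
    _ = C * ‖t‖ ^ n / n.factorial := by ring

lemma summable_C_div_factorial (C : ℝ) : Summable (fun n : ℕ => C / n.factorial) := by
  have := (Real.summable_pow_div_factorial 1).mul_left C
  simpa [div_eq_mul_inv] using this

lemma gfun_continuousOn {μ : ℂ} {C : ℝ} (hC : ∀ n : ℕ, ‖(Complex.Gamma (μ + n + 1))⁻¹‖ ≤ C)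
    (hC0 : 0 ≤ C) :
    ContinuousOn (gfun μ) (Metric.closedBall 0 1) := by
  apply continuousOn_tsum (u := fun n : ℕ => C / n.factorial)
  · intro n
    exact (continuous_const.mul (continuous_pow n)).continuousOn
  · exact summable_C_div_factorial C
  · intro n t ht
    have htn : ‖t‖ ≤ 1 := by
      simpa [Metric.mem_closedBall, dist_eq_norm] using ht
    calc ‖((-1 : ℂ) ^ n / (Complex.Gamma (μ + n + 1) * n.factorial)) * t ^ n‖
        ≤ C * ‖t‖ ^ n / n.factorial := term_norm hC n t
      _ ≤ C * 1 / n.factorial := by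
          gcongr
          exact pow_le_one₀ (norm_nonneg t) htn
      _ = C / n.factorial := by ring

lemma gfun_summable_norm {μ : ℂ} {C : ℝ} (hC : ∀ n : ℕ, ‖(Complex.Gamma (μ + n + 1))⁻¹‖ ≤ C)
    {t : ℂ} (ht : ‖t‖ ≤ 1) :
    Summable (fun n : ℕ =>
      ‖((-1 : ℂ) ^ n / (Complex.Gamma (μ + n + 1) * n.factorial)) * t ^ n‖) := by
  apply Summable.of_nonneg_of_le (fun n => norm_nonneg _)
    (fun n => (term_norm hC n t).trans ?_) (summable_C_div_factorial C)
  calc C * ‖t‖ ^ n / n.factorial ≤ C * 1 / n.factorial := by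
        gcongr
        · exact le_trans (norm_nonneg _) (hC 0)
        · exact pow_le_one₀ (norm_nonneg t) ht
    _ = C / n.factorial := by ring

lemma gfun_bound {μ : ℂ} {C : ℝ} (hC : ∀ n : ℕ, ‖(Complex.Gamma (μ + n + 1))⁻¹‖ ≤ C)
    {t : ℂ} (ht : ‖t‖ ≤ 1) :
    ‖gfun μ t‖ ≤ ∑' n : ℕ, C / n.factorial := by
  have hsum := gfun_summable_norm hC ht
  calc ‖gfun μ t‖ ≤ ∑' n : ℕ, ‖((-1 : ℂ) ^ n / (Complex.Gamma (μ + n + 1) * n.factorial)) * t ^ n‖ :=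
        norm_tsum_le_tsum_norm hsum
    _ ≤ ∑' n : ℕ, C / n.factorial := by
        apply Summable.tsum_le_tsum _ hsum (summable_C_div_factorial C)
        intro n
        calc ‖_‖ ≤ C * ‖t‖ ^ n / n.factorial := term_norm hC n t
          _ ≤ C * 1 / n.factorial := by
              gcongr
              · exact le_trans (norm_nonneg _) (hC 0)
              · exact pow_le_one₀ (norm_nonneg t) ht
          _ = C / n.factorial := by ring

lemma gfun_zero (μ : ℂ) : gfun μ 0 = (Complex.Gamma (μ + 1))⁻¹ := by
  rw [gfun, tsum_eq_single 0]
  · simp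
  · intro n hn
    simp [zero_pow hn]

lemma besselJ_eq (μ w : ℂ) (hw : w ≠ 0) :
    besselJ μ w = (w / 2) ^ μ * gfun μ ((w / 2) ^ 2) := by
  have hw2 : w / 2 ≠ 0 := div_ne_zero hw two_ne_zero
  rw [besselJ, gfun, ← tsum_mul_left]
  apply tsum_congr
  intro n
  rw [Complex.cpow_add _ _ hw2]
  rw [show (2 * (n : ℂ)) = ((2 * n : ℕ) : ℂ) by push_cast; ring,
    Complex.cpow_natCast, pow_mul]
  ring

lemma sqrt_cpow {x : ℝ} (hx : 0 < x) (μ : ℂ) :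
    ((Real.sqrt x : ℝ) : ℂ) ^ μ = (x : ℂ) ^ (μ / 2) := by
  rw [Complex.cpow_def_of_ne_zero (Complex.ofReal_ne_zero.mpr (Real.sqrt_ne_zero'.mpr hx)),
    Complex.cpow_def_of_ne_zero (Complex.ofReal_ne_zero.mpr hx.ne')]
  rw [← Complex.ofReal_log (Real.sqrt_nonneg x), ← Complex.ofReal_log hx.le,
    Real.log_sqrt hx.le]
  congr 1
  push_cast
  ring

noncomputable def Fz (μ A B : ℂ) (z ξ : ℝ) : ℂ :=
  ((ξ : ℂ) ^ (A - 1) * (1 - (ξ : ℂ)) ^ (B - 1)) *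
    (Complex.exp (((ξ : ℂ) - 1 / 2) * z) *
      gfun μ ((ξ : ℂ) * (1 - (ξ : ℂ)) * (z : ℂ) ^ 2 / 4))

noncomputable def flim (μ A B : ℂ) (ξ : ℝ) : ℂ :=
  ((ξ : ℂ) ^ (A - 1) * (1 - (ξ : ℂ)) ^ (B - 1)) * (Complex.Gamma (μ + 1))⁻¹

lemma pointwise_eq (κ μ : ℂ) {z ξ : ℝ} (hz : 0 < z) (hξ : ξ ∈ Set.Ioo (0:ℝ) 1) :
    (ξ : ℂ) ^ ((-κ + 1 / 2) / 2 - 1) * ((1 : ℂ) - (ξ : ℂ)) ^ ((κ + 1 / 2) / 2 - 1) *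
        Complex.exp (((ξ : ℂ) - 1 / 2) * z) *
        besselJ μ ((Real.sqrt (ξ * (1 - ξ)) : ℂ) * z)
    = ((z / 2 : ℝ) : ℂ) ^ μ * Fz μ ((μ - κ + 1 / 2) / 2) ((μ + κ + 1 / 2) / 2) z ξ := by
  obtain ⟨hξ0, hξ1⟩ := hξ
  have h1ξ : 0 < 1 - ξ := by linarith
  have hr : 0 < ξ * (1 - ξ) := mul_pos hξ0 h1ξ
  have hw : ((Real.sqrt (ξ * (1 - ξ)) : ℝ) : ℂ) * z ≠ 0 :=
    mul_ne_zero (Complex.ofReal_ne_zero.mpr (Real.sqrt_ne_zero'.mpr hr))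
      (Complex.ofReal_ne_zero.mpr hz.ne')
  rw [besselJ_eq μ _ hw]
  have hsq : ((((Real.sqrt (ξ * (1 - ξ)) : ℝ) : ℂ) * (z : ℂ)) / 2) ^ 2
      = (ξ : ℂ) * (1 - (ξ : ℂ)) * (z : ℂ) ^ 2 / 4 := by
    have h2 : (((Real.sqrt (ξ * (1 - ξ)) : ℝ) : ℂ)) ^ 2 = (((ξ * (1 - ξ) : ℝ)) : ℂ) := by
      rw [← Complex.ofReal_pow, Real.sq_sqrt hr.le]
    rw [div_pow, mul_pow, h2]
    push_cast
    ring
  have hcpow : ((((Real.sqrt (ξ * (1 - ξ)) : ℝ) : ℂ) * (z : ℂ)) / 2) ^ μ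
      = (ξ : ℂ) ^ (μ / 2) * (1 - (ξ : ℂ)) ^ (μ / 2) * ((z / 2 : ℝ) : ℂ) ^ μ := by
    have e1 : ((((Real.sqrt (ξ * (1 - ξ)) : ℝ) : ℂ) * (z : ℂ)) / 2)
        = ((Real.sqrt (ξ * (1 - ξ)) : ℝ) : ℂ) * ((z / 2 : ℝ) : ℂ) := by
      push_cast; ring
    rw [e1, Complex.mul_cpow_ofReal_nonneg (Real.sqrt_nonneg _) (by linarith : (0:ℝ) ≤ z / 2),
      Real.sqrt_mul hξ0.le, Complex.ofReal_mul,
      Complex.mul_cpow_ofReal_nonneg (Real.sqrt_nonneg _) (Real.sqrt_nonneg _),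
      sqrt_cpow hξ0 μ, sqrt_cpow h1ξ μ]
    push_cast
    ring
  rw [hsq, hcpow, Fz]
  have hx0 : (ξ : ℂ) ≠ 0 := Complex.ofReal_ne_zero.mpr hξ0.ne'
  have hx1 : (1 : ℂ) - (ξ : ℂ) ≠ 0 := by
    rw [show (1 : ℂ) - (ξ : ℂ) = ((1 - ξ : ℝ) : ℂ) by push_cast; ring]
    exact Complex.ofReal_ne_zero.mpr h1ξ.ne'
  rw [show ((μ - κ + 1 / 2) / 2 - 1 : ℂ) = ((-κ + 1 / 2) / 2 - 1) + μ / 2 by ring,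
    show ((μ + κ + 1 / 2) / 2 - 1 : ℂ) = ((κ + 1 / 2) / 2 - 1) + μ / 2 by ring,
    Complex.cpow_add _ _ hx0, Complex.cpow_add _ _ hx1]
  ring

lemma alg_aux {gA gB gh g1 g2 x y sp bt : ℂ} (hgA : gA ≠ 0) (hgB : gB ≠ 0)
    (hgh : gh ≠ 0) (hg1 : g1 ≠ 0) (hx : x ≠ 0) (hsp : sp ≠ 0)
    (hdup : gh * g1 = g2 * (y * y) * sp) (hc : x * y = 1)
    (hbt : bt = gA * gB * gh⁻¹) :
    sp * g2 / (x * gB * gA) * y * (bt * g1⁻¹) = 1 := by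
  have hy : y ≠ 0 := by
    intro h
    rw [h, mul_zero] at hc
    exact one_ne_zero hc.symm
  have hg2 : g2 ≠ 0 := by
    intro h
    rw [h, zero_mul, zero_mul] at hdup
    exact (mul_ne_zero hgh hg1) hdup
  subst hbt
  field_simp
  linear_combination (-x) * hdup + (-(sp * g2 * y)) * hc

lemma const_eq {μ A B : ℂ} (hA : 0 < A.re) (hB : 0 < B.re) (hAB : A + B = μ + 1 / 2)
    (hμ : -1 / 2 < μ.re) :
    (((Real.sqrt π : ℝ) : ℂ) * Complex.Gamma (2 * μ + 1)) /
        ((2 : ℂ) ^ μ * Complex.Gamma B * Complex.Gamma A) * (2 : ℂ) ^ (-μ) *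
      (Complex.betaIntegral A B * (Complex.Gamma (μ + 1))⁻¹) = 1 := by
  have hΓA : Complex.Gamma A ≠ 0 := Complex.Gamma_ne_zero_of_re_pos hA
  have hΓB : Complex.Gamma B ≠ 0 := Complex.Gamma_ne_zero_of_re_pos hB
  have hΓ1 : Complex.Gamma (μ + 1) ≠ 0 := by
    apply Complex.Gamma_ne_zero_of_re_pos
    simp only [Complex.add_re, Complex.one_re]
    linarith
  have hΓh : Complex.Gamma (μ + 1 / 2) ≠ 0 := by
    apply Complex.Gamma_ne_zero_of_re_pos
    have h12 : ((1 : ℂ) / 2).re = 1 / 2 := by norm_num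
    simp only [Complex.add_re, h12]
    linarith
  have h2μ : (2 : ℂ) ^ μ ≠ 0 := by
    intro h
    rw [Complex.cpow_eq_zero_iff] at h
    exact two_ne_zero h.1
  have hπ : (((Real.sqrt π : ℝ)) : ℂ) ≠ 0 :=
    Complex.ofReal_ne_zero.mpr (Real.sqrt_ne_zero'.mpr Real.pi_pos)
  have hbeta := Complex.Gamma_mul_Gamma_eq_betaIntegral hA hB
  rw [hAB] at hbeta
  have hdup := Complex.Gamma_mul_Gamma_add_half (μ + 1 / 2)
  rw [show (μ + 1 / 2 + 1 / 2 : ℂ) = μ + 1 by ring,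
    show (2 * (μ + 1 / 2) : ℂ) = 2 * μ + 1 by ring,
    show (1 - (2 * μ + 1) : ℂ) = -μ + -μ by ring,
    Complex.cpow_add _ _ (two_ne_zero)] at hdup
  have h2cancel : (2 : ℂ) ^ μ * (2 : ℂ) ^ (-μ) = 1 := by
    rw [← Complex.cpow_add _ _ (two_ne_zero), add_neg_cancel, Complex.cpow_zero]
  have hbeta' : Complex.betaIntegral A B
      = Complex.Gamma A * Complex.Gamma B * (Complex.Gamma (μ + 1 / 2))⁻¹ := by
    rw [hbeta, mul_comm (Complex.Gamma (μ + 1 / 2)), mul_assoc,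
      mul_inv_cancel₀ hΓh, mul_one]
  exact alg_aux hΓA hΓB hΓh hΓ1 h2μ hπ hdup h2cancel hbeta'

end WhittakerAux

open WhittakerAux in
theorem whittaker_integral_boundary_condition (κ μ : ℂ)
    (h₁ : 0 < (μ + κ + 1 / 2).re) (h₂ : 0 < (μ - κ + 1 / 2).re) :
    Filter.Tendsto
      (fun z : ℝ => (z : ℂ) ^ (-(μ + 1 / 2)) *
        ((Real.sqrt π * Complex.Gamma (2 * μ + 1)) /
            ((2 : ℂ) ^ μ * Complex.Gamma ((μ + κ + 1 / 2) / 2) *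
              Complex.Gamma ((μ - κ + 1 / 2) / 2)) *
          ((Real.sqrt z : ℂ) *
            ∫ ξ in (0:ℝ)..1,
              (ξ : ℂ) ^ ((-κ + 1 / 2) / 2 - 1) * ((1 : ℂ) - (ξ : ℂ)) ^ ((κ + 1 / 2) / 2 - 1) *
                Complex.exp (((ξ : ℂ) - 1 / 2) * z) *
                besselJ μ ((Real.sqrt (ξ * (1 - ξ)) : ℂ) * z))))
      (nhdsWithin 0 (Set.Ioi 0)) (nhds 1) := by
  have hre2 : ∀ x : ℂ, (x / 2).re = x.re / 2 := by
    intro x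
    rw [Complex.div_re]
    simp [Complex.normSq]
    ring
  set A : ℂ := (μ - κ + 1 / 2) / 2 with hA_def
  set B : ℂ := (μ + κ + 1 / 2) / 2 with hB_def
  have hA : 0 < A.re := by rw [hA_def, hre2]; linarith
  have hB : 0 < B.re := by rw [hB_def, hre2]; linarith
  have h12re : ((1 : ℂ) / 2).re = 1 / 2 := by norm_num
  have hμhalf : -1 / 2 < μ.re := by
    have e1 : (μ + κ + 1 / 2).re = μ.re + κ.re + 1 / 2 := by
      simp [Complex.add_re, h12re]
    have e2 : (μ - κ + 1 / 2).re = μ.re - κ.re + 1 / 2 := by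
      simp [Complex.add_re, Complex.sub_re, h12re]
    rw [e1] at h₁; rw [e2] at h₂
    linarith
  have hμ1 : -1 < μ.re := by linarith
  obtain ⟨C, hC0, hC⟩ := gamma_inv_bound hμ1
  set D : ℝ := ∑' n : ℕ, C / n.factorial with hD_def
  have hg := gfun_continuousOn hC hC0.le
  have hIoc : Set.uIoc (0:ℝ) 1 = Set.Ioc 0 1 := Set.uIoc_of_le zero_le_one
  -- norm bound on the gfun argument
  have harg : ∀ z ∈ Set.Ioc (0:ℝ) 1, ∀ ξ ∈ Set.Icc (0:ℝ) 1,
      ‖(ξ : ℂ) * (1 - (ξ : ℂ)) * (z : ℂ) ^ 2 / 4‖ ≤ 1 := by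
    intro z hz ξ hξ
    have e : ((ξ:ℂ) * (1 - (ξ:ℂ)) * (z:ℂ) ^ 2 / 4) = (((ξ * (1 - ξ) * z ^ 2 / 4 : ℝ)) : ℂ) := by
      push_cast; ring
    have h0 : (0:ℝ) ≤ ξ * (1 - ξ) := mul_nonneg hξ.1 (by linarith [hξ.2])
    have hz2 : z ^ 2 ≤ 1 := by nlinarith [hz.1, hz.2]
    have hxx : ξ * (1 - ξ) ≤ 1 := by nlinarith [hξ.1, hξ.2]
    have hprod : ξ * (1 - ξ) * z ^ 2 ≤ 1 := by
      nlinarith [mul_nonneg h0 (sub_nonneg.mpr hz2), hxx]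
    rw [e, Complex.norm_real, Real.norm_eq_abs]
    rw [_root_.abs_of_nonneg (by
      apply div_nonneg (mul_nonneg h0 (sq_nonneg z)); norm_num)]
    linarith [hprod]
  -- the exponential bound
  have hexp : ∀ z ∈ Set.Ioc (0:ℝ) 1, ∀ ξ ∈ Set.Icc (0:ℝ) 1,
      ‖Complex.exp (((ξ : ℂ) - 1 / 2) * z)‖ ≤ Real.exp 1 := by
    intro z hz ξ hξ
    have e : ((ξ:ℂ) - 1/2) * z = (((ξ - 1/2) * z : ℝ) : ℂ) := by push_cast; ring
    rw [e, Complex.norm_exp, Complex.ofReal_re]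
    apply Real.exp_le_exp.mpr
    nlinarith [hz.1, hz.2, hξ.1, hξ.2,
      mul_nonneg (by linarith [hξ.2] : (0:ℝ) ≤ 1 - ξ) hz.1.le]
  have hD0 : 0 ≤ D := by
    rw [hD_def]
    apply tsum_nonneg
    intro n
    positivity
  -- measurability of the beta-type factor
  have hbeta_int := Complex.betaIntegral_convergent hA hB
  have hbeta_meas : MeasureTheory.AEStronglyMeasurable
      (fun ξ : ℝ => (ξ:ℂ) ^ (A - 1) * (1 - (ξ:ℂ)) ^ (B - 1))
      (MeasureTheory.volume.restrict (Set.uIoc (0:ℝ) 1)) :=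
    (intervalIntegrable_iff.mp hbeta_int).aestronglyMeasurable
  -- continuity of the other factor
  have hcont2 : ∀ z : ℝ, z ∈ Set.Ioc (0:ℝ) 1 → ContinuousOn (fun ξ : ℝ =>
      Complex.exp (((ξ : ℂ) - 1 / 2) * z) *
        gfun μ ((ξ:ℂ) * (1 - (ξ:ℂ)) * (z:ℂ) ^ 2 / 4)) (Set.Icc 0 1) := by
    intro z hz
    apply ContinuousOn.mul
    · apply Continuous.continuousOn
      exact Complex.continuous_exp.comp
        (((Complex.continuous_ofReal).sub continuous_const).mul continuous_const)
    · apply hg.comp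
      · apply Continuous.continuousOn
        fun_prop
      · intro ξ hξ
        have := harg z hz ξ hξ
        simpa [Metric.mem_closedBall, dist_eq_norm] using this
  -- the dominated convergence step
  have key : Filter.Tendsto (fun z : ℝ => ∫ ξ in (0:ℝ)..1, Fz μ A B z ξ)
      (nhdsWithin 0 (Set.Ioi 0)) (nhds (∫ ξ in (0:ℝ)..1, flim μ A B ξ)) := by
    apply intervalIntegral.tendsto_integral_filter_of_dominated_convergence
      (bound := fun ξ => ‖(ξ:ℂ) ^ (A - 1) * (1 - (ξ:ℂ)) ^ (B - 1)‖ * (Real.exp 1 * D))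
    · filter_upwards [Ioc_mem_nhdsGT (zero_lt_one)] with z hz
      apply hbeta_meas.mul
      have h : MeasureTheory.AEStronglyMeasurable _
          (MeasureTheory.volume.restrict (Set.Icc (0:ℝ) 1)) :=
        (hcont2 z hz).aestronglyMeasurable measurableSet_Icc
      apply h.mono_measure
      rw [hIoc]
      exact MeasureTheory.Measure.restrict_mono Set.Ioc_subset_Icc_self le_rfl
    · filter_upwards [Ioc_mem_nhdsGT (zero_lt_one)] with z hz
      apply Filter.Eventually.of_forall
      intro ξ hξ
      rw [hIoc] at hξ
      have hξ' : ξ ∈ Set.Icc (0:ℝ) 1 := ⟨hξ.1.le, hξ.2⟩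
      rw [Fz, norm_mul]
      apply mul_le_mul_of_nonneg_left _ (norm_nonneg _)
      rw [norm_mul]
      apply mul_le_mul (hexp z hz ξ hξ') _ (norm_nonneg _) (Real.exp_pos 1).le
      exact gfun_bound hC (harg z hz ξ hξ')
    · exact hbeta_int.norm.mul_const _
    · apply Filter.Eventually.of_forall
      intro ξ hξ
      rw [hIoc] at hξ
      have hξ' : ξ ∈ Set.Icc (0:ℝ) 1 := ⟨hξ.1.le, hξ.2⟩
      have h1 : Filter.Tendsto (fun z : ℝ => Complex.exp (((ξ:ℂ) - 1/2) * z))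
          (nhdsWithin 0 (Set.Ioi 0)) (nhds 1) := by
        have hcont : Continuous (fun z : ℝ => Complex.exp (((ξ:ℂ) - 1/2) * z)) :=
          Complex.continuous_exp.comp (continuous_const.mul Complex.continuous_ofReal)
        have h := hcont.tendsto 0
        simp only [Complex.ofReal_zero, mul_zero, Complex.exp_zero] at h
        exact h.mono_left nhdsWithin_le_nhds
      have h2 : Filter.Tendsto (fun z : ℝ => gfun μ ((ξ:ℂ) * (1 - (ξ:ℂ)) * (z:ℂ) ^ 2 / 4))
          (nhdsWithin 0 (Set.Ioi 0)) (nhds ((Complex.Gamma (μ + 1))⁻¹)) := by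
        rw [← gfun_zero μ]
        apply (hg.continuousWithinAt (by simp : (0:ℂ) ∈ Metric.closedBall 0 1)).tendsto.comp
        apply tendsto_nhdsWithin_of_tendsto_nhds_of_eventually_within
        · have hcont : Continuous (fun z : ℝ => (ξ:ℂ) * (1 - (ξ:ℂ)) * (z:ℂ) ^ 2 / 4) := by
            fun_prop
          have h := hcont.tendsto 0
          simp only [Complex.ofReal_zero, ne_eq, OfNat.ofNat_ne_zero, not_false_eq_true,
            zero_pow, mul_zero, zero_div] at h
          exact h.mono_left nhdsWithin_le_nhds
        · filter_upwards [Ioc_mem_nhdsGT (zero_lt_one)] with z hz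
          simpa [Metric.mem_closedBall, dist_eq_norm] using harg z hz ξ hξ'
      have h3 := (Filter.Tendsto.mul h1 h2).const_mul
        ((ξ:ℂ) ^ (A - 1) * (1 - (ξ:ℂ)) ^ (B - 1))
      simp only [one_mul] at h3
      exact h3
  -- value of the limit integral
  have hf_int : (∫ ξ in (0:ℝ)..1, flim μ A B ξ)
      = Complex.betaIntegral A B * (Complex.Gamma (μ + 1))⁻¹ := by
    rw [Complex.betaIntegral, ← intervalIntegral.integral_mul_const]
    rfl
  -- the eventual identity
  set K : ℂ := (Real.sqrt π * Complex.Gamma (2 * μ + 1)) /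
      ((2 : ℂ) ^ μ * Complex.Gamma B * Complex.Gamma A) with hK_def
  have hmain : ∀ z ∈ Set.Ioi (0:ℝ),
      (z : ℂ) ^ (-(μ + 1 / 2)) * (K *
        ((Real.sqrt z : ℂ) *
          ∫ ξ in (0:ℝ)..1,
            (ξ : ℂ) ^ ((-κ + 1 / 2) / 2 - 1) * ((1 : ℂ) - (ξ : ℂ)) ^ ((κ + 1 / 2) / 2 - 1) *
              Complex.exp (((ξ : ℂ) - 1 / 2) * z) *
              besselJ μ ((Real.sqrt (ξ * (1 - ξ)) : ℂ) * z)))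
      = (K * (2:ℂ) ^ (-μ)) * ∫ ξ in (0:ℝ)..1, Fz μ A B z ξ := by
    intro z hz
    rw [Set.mem_Ioi] at hz
    have hzC : (z:ℂ) ≠ 0 := Complex.ofReal_ne_zero.mpr hz.ne'
    have hcong : (∫ ξ in (0:ℝ)..1,
        (ξ : ℂ) ^ ((-κ + 1 / 2) / 2 - 1) * ((1 : ℂ) - (ξ : ℂ)) ^ ((κ + 1 / 2) / 2 - 1) *
          Complex.exp (((ξ : ℂ) - 1 / 2) * z) *
          besselJ μ ((Real.sqrt (ξ * (1 - ξ)) : ℂ) * z))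
        = ((z / 2 : ℝ) : ℂ) ^ μ * ∫ ξ in (0:ℝ)..1, Fz μ A B z ξ := by
      rw [← intervalIntegral.integral_const_mul]
      apply intervalIntegral.integral_congr_ae
      have hae : ∀ᵐ x : ℝ, x ∈ ({1} : Set ℝ)ᶜ :=
        MeasureTheory.compl_mem_ae_iff.mpr (MeasureTheory.measure_singleton 1)
      filter_upwards [hae] with ξ hξ1 hξ
      rw [hIoc] at hξ
      simp only [Set.mem_compl_iff, Set.mem_singleton_iff] at hξ1
      exact pointwise_eq κ μ hz ⟨hξ.1, lt_of_le_of_ne hξ.2 hξ1⟩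
    rw [hcong]
    have hsz : ((Real.sqrt z : ℝ) : ℂ) = (z:ℂ) ^ ((1:ℂ)/2) := by
      have h := sqrt_cpow hz (1 : ℂ)
      rwa [Complex.cpow_one] at h
    have hz2 : ((z / 2 : ℝ) : ℂ) ^ μ = (z:ℂ) ^ μ * (2:ℂ) ^ (-μ) := by
      rw [show (z / 2 : ℝ) = z * (2⁻¹ : ℝ) by ring, Complex.ofReal_mul,
        Complex.mul_cpow_ofReal_nonneg hz.le (by norm_num),
        show (((2:ℝ)⁻¹ : ℝ) : ℂ) = (2:ℂ)⁻¹ by norm_num,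
        Complex.inv_cpow _ _ ?_, Complex.cpow_neg]
      rw [show (2:ℂ) = ((2:ℝ) : ℂ) by norm_num, Complex.arg_ofReal_of_nonneg (by norm_num)]
      exact Ne.symm Real.pi_ne_zero
    have hzz : (z:ℂ) ^ (-(μ + 1/2)) * ((z:ℂ) ^ ((1:ℂ)/2) * (z:ℂ) ^ μ) = 1 := by
      rw [← Complex.cpow_add _ _ hzC, ← Complex.cpow_add _ _ hzC,
        show (-(μ + 1/2) + (1/2 + μ) : ℂ) = 0 by ring, Complex.cpow_zero]
    rw [hsz, hz2]
    linear_combination (K * (2:ℂ) ^ (-μ) * (∫ ξ in (0:ℝ)..1, Fz μ A B z ξ)) * hzz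
  -- conclude
  have hfin : (K * (2:ℂ) ^ (-μ)) * (Complex.betaIntegral A B * (Complex.Gamma (μ + 1))⁻¹) = 1 := by
    rw [hK_def]
    rw [show ((Real.sqrt π : ℝ) : ℂ) * Complex.Gamma (2 * μ + 1) /
        ((2:ℂ) ^ μ * Complex.Gamma B * Complex.Gamma A) * (2:ℂ) ^ (-μ) *
        (Complex.betaIntegral A B * (Complex.Gamma (μ + 1))⁻¹) = 1
      from const_eq hA hB (by rw [hA_def, hB_def]; ring) hμhalf]
  have hlim := key.const_mul (K * (2:ℂ) ^ (-μ))
  rw [hf_int, hfin] at hlim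
  apply Filter.Tendsto.congr' _ hlim
  filter_upwards [self_mem_nhdsWithin] with z hz
  exact (hmain z hz).symm
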